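/- Assume a11 < 0, a12 < 0, a21 > 0, a22 < 0, that A₂ := d11 d22 − d21 ξ u* v* > 0, that A₁ := d11 a22 + d22 a11 − a21 ξ u* − d21 v* a12 > 0, and that A₃ := A₁² − 4 A₂ (a11 a22 − a12 a21) > 0. Set n₁ = ℓ √x̃₁ and n₂ = ℓ √x̃₂ where x̃₁ = (A₁ − √A₃)/(2A₂), x̃₂ = (A₁ + √A₃)/(2A₂). Then for every n ∈ ℕ, the quantity Q_n := J_n² − D_n² satisfies Q_n < 0 whenever n₁ < n < n₂, and Q_n ≥ 0 whenever n ≤ n₁ or n ≥ n₂. -/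

import Mathlib

/-- `Jₙ = d11 d22 n⁴/ℓ⁴ - (d11 a22 + d22 a11 - a21 ξ u*) n²/ℓ² + Det(A)`. -/
noncomputable def Jn (ℓ d11 d22 ξ ustar a11 a12 a21 a22 : ℝ) (n : ℕ) : ℝ :=
  d11 * d22 * (n : ℝ) ^ 4 / ℓ ^ 4
    - (d11 * a22 + d22 * a11 - a21 * ξ * ustar) * (n : ℝ) ^ 2 / ℓ ^ 2
    + (a11 * a22 - a12 * a21)

/-- `Dₙ = d21 ξ u* v* n⁴/ℓ⁴ - d21 v* a12 n²/ℓ²`. -/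
noncomputable def Dn (ℓ d21 ξ ustar vstar a12 : ℝ) (n : ℕ) : ℝ :=
  d21 * ξ * ustar * vstar * (n : ℝ) ^ 4 / ℓ ^ 4 - d21 * vstar * a12 * (n : ℝ) ^ 2 / ℓ ^ 2

lemma quad_fac (A1 A2 C s x : ℝ) (hA2 : A2 ≠ 0) (hs : s ^ 2 = A1 ^ 2 - 4 * A2 * C) :
    A2 * x ^ 2 - A1 * x + C = A2 * (x - (A1 - s) / (2 * A2)) * (x - (A1 + s) / (2 * A2)) := by
  field_simp
  linear_combination hs

lemma sub_eq (ℓ d11 d22 d21 ξ ustar vstar a11 a12 a21 a22 m : ℝ) (hℓ : ℓ ≠ 0) :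
    (d11 * d22 * m ^ 4 / ℓ ^ 4
      - (d11 * a22 + d22 * a11 - a21 * ξ * ustar) * m ^ 2 / ℓ ^ 2
      + (a11 * a22 - a12 * a21))
    - (d21 * ξ * ustar * vstar * m ^ 4 / ℓ ^ 4 - d21 * vstar * a12 * m ^ 2 / ℓ ^ 2)
    = (d11 * d22 - d21 * ξ * ustar * vstar) * (m ^ 2 / ℓ ^ 2) ^ 2
      - (d11 * a22 + d22 * a11 - a21 * ξ * ustar - d21 * vstar * a12) * (m ^ 2 / ℓ ^ 2)
      + (a11 * a22 - a12 * a21) := by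
  field_simp
  ring

lemma add_eq (ℓ d11 d22 d21 ξ ustar vstar a11 a12 a21 a22 m : ℝ) (hℓ : ℓ ≠ 0) :
    (d11 * d22 * m ^ 4 / ℓ ^ 4
      - (d11 * a22 + d22 * a11 - a21 * ξ * ustar) * m ^ 2 / ℓ ^ 2
      + (a11 * a22 - a12 * a21))
    + (d21 * ξ * ustar * vstar * m ^ 4 / ℓ ^ 4 - d21 * vstar * a12 * m ^ 2 / ℓ ^ 2)
    = (d11 * d22 + d21 * ξ * ustar * vstar) * (m ^ 2 / ℓ ^ 2) ^ 2
      + (a21 * ξ * ustar - d11 * a22 - d22 * a11 - d21 * vstar * a12) * (m ^ 2 / ℓ ^ 2)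
      + (a11 * a22 - a12 * a21) := by
  field_simp
  ring

/-- Under the sign conditions and the conditions of Case 4.2,
`Qₙ = Jₙ² - Dₙ² < 0` for `n₁ < n < n₂`, and `Qₙ ≥ 0` for `n ≤ n₁` or `n ≥ n₂`,
where `n₁ = ℓ√x̃₁` and `n₂ = ℓ√x̃₂`. -/
theorem stmt_12 (ℓ d11 d22 d21 ξ ustar vstar a11 a12 a21 a22 : ℝ)
    (hℓ : 0 < ℓ) (h11 : 0 ≤ d11) (h22 : 0 ≤ d22) (h21 : 0 ≤ d21) (hξ : 0 ≤ ξ)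
    (hu : 0 < ustar) (hv : 0 < vstar)
    (ha11 : a11 < 0) (ha12 : a12 < 0) (ha21 : 0 < a21) (ha22 : a22 < 0)
    (A1 A2 A3 : ℝ)
    (hA1def : A1 = d11 * a22 + d22 * a11 - a21 * ξ * ustar - d21 * vstar * a12)
    (hA2def : A2 = d11 * d22 - d21 * ξ * ustar * vstar)
    (hA3def : A3 = A1 ^ 2 - 4 * A2 * (a11 * a22 - a12 * a21))
    (hA1 : 0 < A1) (hA2 : 0 < A2) (hA3 : 0 < A3)
    (x1 x2 n1 n2 : ℝ)
    (hx1 : x1 = (A1 - Real.sqrt A3) / (2 * A2))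
    (hx2 : x2 = (A1 + Real.sqrt A3) / (2 * A2))
    (hn1 : n1 = ℓ * Real.sqrt x1) (hn2 : n2 = ℓ * Real.sqrt x2) :
    ∀ n : ℕ, 1 ≤ n →
      ((n1 < (n : ℝ) ∧ (n : ℝ) < n2 →
          (Jn ℓ d11 d22 ξ ustar a11 a12 a21 a22 n) ^ 2
            - (Dn ℓ d21 ξ ustar vstar a12 n) ^ 2 < 0) ∧
       (((n : ℝ) ≤ n1 ∨ n2 ≤ (n : ℝ)) →
          0 ≤ (Jn ℓ d11 d22 ξ ustar a11 a12 a21 a22 n) ^ 2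
            - (Dn ℓ d21 ξ ustar vstar a12 n) ^ 2)) := by
  intro n hn
  have hℓ' : ℓ ≠ 0 := hℓ.ne'
  set J := Jn ℓ d11 d22 ξ ustar a11 a12 a21 a22 n with hJ
  set D := Dn ℓ d21 ξ ustar vstar a12 n with hD
  set x : ℝ := (n : ℝ) ^ 2 / ℓ ^ 2 with hxdef
  have hnn : (0:ℝ) ≤ (n:ℝ) := Nat.cast_nonneg n
  have hx0 : 0 ≤ x := by positivity
  have hC : 0 < a11 * a22 - a12 * a21 := by
    have h1 : 0 < a11 * a22 := mul_pos_of_neg_of_neg ha11 ha22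
    have h2 : a12 * a21 < 0 := mul_neg_of_neg_of_pos ha12 ha21
    linarith
  have hs3 : Real.sqrt A3 ^ 2 = A3 := Real.sq_sqrt hA3.le
  have hs3pos : 0 < Real.sqrt A3 := Real.sqrt_pos.mpr hA3
  have hslt : Real.sqrt A3 < A1 := by
    rw [Real.sqrt_lt' hA1]
    have h4 : 0 < 4 * A2 * (a11 * a22 - a12 * a21) := by positivity
    linarith [hA3def.symm.le, hA3def.ge]
  have h2A2 : (0:ℝ) < 2 * A2 := by linarith
  have hx1pos : 0 < x1 := by
    rw [hx1]; exact div_pos (by linarith) h2A2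
  have hx12 : x1 < x2 := by
    rw [hx1, hx2]
    exact div_lt_div_of_pos_right (by linarith) h2A2
  have hx2pos : 0 < x2 := lt_trans hx1pos hx12
  have hs1 : Real.sqrt x1 ^ 2 = x1 := Real.sq_sqrt hx1pos.le
  have hs2 : Real.sqrt x2 ^ 2 = x2 := Real.sq_sqrt hx2pos.le
  have hs1n : 0 ≤ Real.sqrt x1 := Real.sqrt_nonneg _
  have hs2n : 0 ≤ Real.sqrt x2 := Real.sqrt_nonneg _
  have hsub : J - D = A2 * x ^ 2 - A1 * x + (a11 * a22 - a12 * a21) := by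
    rw [hJ, hD, Jn, Dn, hA1def, hA2def, hxdef]
    exact sub_eq ℓ d11 d22 d21 ξ ustar vstar a11 a12 a21 a22 (n:ℝ) hℓ'
  have hfac : A2 * x ^ 2 - A1 * x + (a11 * a22 - a12 * a21)
      = A2 * (x - x1) * (x - x2) := by
    rw [hx1, hx2]
    exact quad_fac A1 A2 _ (Real.sqrt A3) x hA2.ne' (by rw [hs3, hA3def])
  have hadd : J + D = (d11 * d22 + d21 * ξ * ustar * vstar) * x ^ 2
      + (a21 * ξ * ustar - d11 * a22 - d22 * a11 - d21 * vstar * a12) * x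
      + (a11 * a22 - a12 * a21) := by
    rw [hJ, hD, Jn, Dn, hxdef]
    exact add_eq ℓ d11 d22 d21 ξ ustar vstar a11 a12 a21 a22 (n:ℝ) hℓ'
  have haddpos : 0 < J + D := by
    rw [hadd]
    have h1 : 0 ≤ (d11 * d22 + d21 * ξ * ustar * vstar) * x ^ 2 := by positivity
    have h2 : 0 ≤ (a21 * ξ * ustar - d11 * a22 - d22 * a11 - d21 * vstar * a12) * x := by
      apply mul_nonneg _ hx0
      have hb1 : d11 * a22 ≤ 0 := mul_nonpos_of_nonneg_of_nonpos h11 ha22.le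
      have hb2 : d22 * a11 ≤ 0 := mul_nonpos_of_nonneg_of_nonpos h22 ha11.le
      have hb3 : d21 * vstar * a12 ≤ 0 :=
        mul_nonpos_of_nonneg_of_nonpos (mul_nonneg h21 hv.le) ha12.le
      have hb4 : 0 ≤ a21 * ξ * ustar := by positivity
      linarith
    linarith
  have hsq : J ^ 2 - D ^ 2 = (J + D) * (J - D) := by ring
  constructor
  · rintro ⟨hl, hr⟩
    have hxl : x1 < x := by
      rw [hn1] at hl
      have h2 : (ℓ * Real.sqrt x1) ^ 2 < (n:ℝ) ^ 2 := by
        apply pow_lt_pow_left₀ hl (by positivity)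
        norm_num
      have h3 : (ℓ * Real.sqrt x1) ^ 2 = x1 * ℓ ^ 2 := by rw [mul_pow, hs1]; ring
      rw [hxdef, lt_div_iff₀ (by positivity : (0:ℝ) < ℓ ^ 2)]
      linarith
    have hxr : x < x2 := by
      rw [hn2] at hr
      have h2 : (n:ℝ) ^ 2 < (ℓ * Real.sqrt x2) ^ 2 := by
        apply pow_lt_pow_left₀ hr hnn
        norm_num
      have h3 : (ℓ * Real.sqrt x2) ^ 2 = x2 * ℓ ^ 2 := by rw [mul_pow, hs2]; ring
      rw [hxdef, div_lt_iff₀ (by positivity : (0:ℝ) < ℓ ^ 2)]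
      linarith
    rw [hsq, hsub, hfac]
    exact mul_neg_of_pos_of_neg haddpos
      (mul_neg_of_pos_of_neg (mul_pos hA2 (by linarith)) (by linarith))
  · intro h
    rw [hsq, hsub, hfac]
    apply mul_nonneg haddpos.le
    rcases h with h | h
    · have hxl : x ≤ x1 := by
        rw [hn1] at h
        have h2 : (n:ℝ) ^ 2 ≤ (ℓ * Real.sqrt x1) ^ 2 := pow_le_pow_left₀ hnn h 2
        have h3 : (ℓ * Real.sqrt x1) ^ 2 = x1 * ℓ ^ 2 := by rw [mul_pow, hs1]; ring
        rw [hxdef, div_le_iff₀ (by positivity : (0:ℝ) < ℓ ^ 2)]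
        linarith
      have h5 : A2 * (x - x1) ≤ 0 :=
        mul_nonpos_of_nonneg_of_nonpos hA2.le (by linarith)
      have h6 : x - x2 ≤ 0 := by linarith
      calc (0:ℝ) ≤ (-(A2 * (x - x1))) * (-(x - x2)) :=
              mul_nonneg (neg_nonneg.2 h5) (neg_nonneg.2 h6)
        _ = A2 * (x - x1) * (x - x2) := by ring
    · have hxr : x2 ≤ x := by
        rw [hn2] at h
        have h2 : (ℓ * Real.sqrt x2) ^ 2 ≤ (n:ℝ) ^ 2 := pow_le_pow_left₀ (by positivity) h 2
        have h3 : (ℓ * Real.sqrt x2) ^ 2 = x2 * ℓ ^ 2 := by rw [mul_pow, hs2]; ring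
        rw [hxdef, le_div_iff₀ (by positivity : (0:ℝ) < ℓ ^ 2)]
        linarith
      exact mul_nonneg (mul_nonneg hA2.le (by linarith)) (by linarith)
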